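/- Let J^i_j : U → ℝ (1 ≤ i, j ≤ 6) be differentiable functions satisfying J^1_1 = 0, J^2_1 = cos(u³)/sin(u¹), J^3_1 = -cos(u²) sin(u³)/(sin(u¹) sin(u²)), J^1_2 = -sin(u¹) cos(u³), and J^1_3 = sin(u¹) cos(u²) sin(u²) sin(u³), and let a, c : U → ℝ be differentiable. Suppose the identity a·c·Σ_{k,s} g^{ks} J^l_s ∂J^j_i/∂u^k + c·Σ_{k,s} (∂a/∂u^k) g^{ks} J^l_s J^j_i = 0 holds on U for the index choices (i, l, j) = (1, 1, 2) and (i, l, j) = (1, 1, 3). Then a·c ≡ 0 on U. -/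

import Mathlib

open Real

noncomputable section

/-- The `k`-th partial derivative of a function `f : ℝ⁶ → ℝ` at a point `x`. -/
def pder {n : ℕ} (k : Fin n) (f : (Fin n → ℝ) → ℝ) (x : Fin n → ℝ) : ℝ :=
  fderiv ℝ f x (Pi.single k 1)

/-- The spherical coordinates domain `U = (0,π)⁵ × (0,2π) ⊆ ℝ⁶`. -/
def sphDomain : Set (Fin 6 → ℝ) :=
  {x | (∀ i : Fin 6, (i : ℕ) < 5 → x i ∈ Set.Ioo 0 π) ∧ x 5 ∈ Set.Ioo 0 (2 * π)}

/-- The components `g^{ij}` of the inverse round metric of `S⁶` in spherical coordinates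
(indices `0,…,5` correspond to `1,…,6`): `g^{ij} = 0` for `i ≠ j` and
`g^{ii} = 1/(sin²(u¹)⋯sin²(u^{i-1}))`. -/
def ginv (i j : Fin 6) (x : Fin 6 → ℝ) : ℝ :=
  if i = j then (∏ m ∈ Finset.univ.filter (fun m : Fin 6 => m < i), Real.sin (x m) ^ 2)⁻¹ else 0

/- ### Auxiliary lemmas -/

def prj (i : Fin 6) : (Fin 6 → ℝ) →L[ℝ] ℝ := ContinuousLinearMap.proj i

lemma hasFDerivAt_coord (i : Fin 6) (g : ℝ → ℝ) (g' : ℝ) (y : Fin 6 → ℝ)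
    (hg : HasDerivAt g g' (y i)) :
    HasFDerivAt (fun x : Fin 6 → ℝ => g (x i)) (g' • prj i) y := by
  simpa [Function.comp_def, prj] using
    hg.comp_hasFDerivAt (f := fun x : Fin 6 → ℝ => x i) y (hasFDerivAt_apply i y)

set_option maxHeartbeats 1000000 in
lemma pder_f1 (y : Fin 6 → ℝ) (hy : Real.sin (y 0) ≠ 0) (k : Fin 6) :
    pder k (fun x : Fin 6 → ℝ => Real.cos (x 2) / Real.sin (x 0)) y =
      if k = 0 then -(Real.cos (y 2) * Real.cos (y 0)) / Real.sin (y 0) ^ 2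
      else if k = 2 then -Real.sin (y 2) / Real.sin (y 0) else 0 := by
  have hinv : HasFDerivAt (fun x : Fin 6 → ℝ => (Real.sin (x 0))⁻¹)
      ((-Real.cos (y 0) / Real.sin (y 0) ^ 2) • prj 0) y :=
    hasFDerivAt_coord 0 _ _ y ((Real.hasDerivAt_sin (y 0)).inv hy)
  have hcs : HasFDerivAt (fun x : Fin 6 → ℝ => Real.cos (x 2))
      ((-Real.sin (y 2)) • prj 2) y :=
    hasFDerivAt_coord 2 _ _ y (Real.hasDerivAt_cos (y 2))
  have hmul := hcs.mul hinv
  have heq : (fun x : Fin 6 → ℝ => Real.cos (x 2) / Real.sin (x 0))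
      = fun x : Fin 6 → ℝ => Real.cos (x 2) * (Real.sin (x 0))⁻¹ := by
    funext z; rw [div_eq_mul_inv]
  rw [pder, heq, HasFDerivAt.fderiv
    (f := fun x : Fin 6 → ℝ => Real.cos (x 2) * (Real.sin (x 0))⁻¹) hmul]
  fin_cases k <;>
    simp [prj, Pi.single_apply] <;> (try field_simp)

set_option maxHeartbeats 1000000 in
lemma pder_f2 (y : Fin 6 → ℝ) (hy0 : Real.sin (y 0) ≠ 0) (hy1 : Real.sin (y 1) ≠ 0) (k : Fin 6) :
    pder k (fun x : Fin 6 → ℝ =>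
        -(Real.cos (x 1) * Real.sin (x 2)) / (Real.sin (x 0) * Real.sin (x 1))) y =
      if k = 0 then Real.cos (y 1) * Real.sin (y 2) * Real.cos (y 0) /
          (Real.sin (y 0) ^ 2 * Real.sin (y 1))
      else if k = 1 then Real.sin (y 2) / (Real.sin (y 0) * Real.sin (y 1) ^ 2)
      else if k = 2 then -(Real.cos (y 1) * Real.cos (y 2)) / (Real.sin (y 0) * Real.sin (y 1))
      else 0 := by
  have hinv0 : HasFDerivAt (fun x : Fin 6 → ℝ => (Real.sin (x 0))⁻¹)
      ((-Real.cos (y 0) / Real.sin (y 0) ^ 2) • prj 0) y :=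
    hasFDerivAt_coord 0 _ _ y ((Real.hasDerivAt_sin (y 0)).inv hy0)
  have hinv1 : HasFDerivAt (fun x : Fin 6 → ℝ => (Real.sin (x 1))⁻¹)
      ((-Real.cos (y 1) / Real.sin (y 1) ^ 2) • prj 1) y :=
    hasFDerivAt_coord 1 _ _ y ((Real.hasDerivAt_sin (y 1)).inv hy1)
  have hc1 : HasFDerivAt (fun x : Fin 6 → ℝ => Real.cos (x 1))
      ((-Real.sin (y 1)) • prj 1) y :=
    hasFDerivAt_coord 1 _ _ y (Real.hasDerivAt_cos (y 1))
  have hs2 : HasFDerivAt (fun x : Fin 6 → ℝ => Real.sin (x 2))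
      ((Real.cos (y 2)) • prj 2) y :=
    hasFDerivAt_coord 2 _ _ y (Real.hasDerivAt_sin (y 2))
  have hnum := (hc1.mul hs2).neg
  have hmul := (hnum.mul hinv0).mul hinv1
  have heq : (fun x : Fin 6 → ℝ =>
        -(Real.cos (x 1) * Real.sin (x 2)) / (Real.sin (x 0) * Real.sin (x 1)))
      = fun x : Fin 6 → ℝ =>
        -(Real.cos (x 1) * Real.sin (x 2)) * (Real.sin (x 0))⁻¹ * (Real.sin (x 1))⁻¹ := by
    funext z; rw [div_eq_mul_inv, mul_inv]; ring
  rw [pder, heq, HasFDerivAt.fderiv (f := fun x : Fin 6 → ℝ =>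
    -(Real.cos (x 1) * Real.sin (x 2)) * (Real.sin (x 0))⁻¹ * (Real.sin (x 1))⁻¹) hmul]
  fin_cases k <;>
    simp [prj, Pi.single_apply] <;> (try field_simp) <;> (try (left; ring)) <;>
      (try (linear_combination (Real.sin (y 2)) *
        Real.sin_sq_add_cos_sq (y 1)))

lemma ginv_00 (x : Fin 6 → ℝ) : ginv 0 0 x = 1 := by
  rw [ginv, if_pos rfl, show (Finset.univ.filter (fun m : Fin 6 => m < 0)) = ∅ by decide]
  simp

lemma ginv_11 (x : Fin 6 → ℝ) : ginv 1 1 x = (Real.sin (x 0) ^ 2)⁻¹ := by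
  rw [ginv, if_pos rfl, show (Finset.univ.filter (fun m : Fin 6 => m < 1)) = {0} by decide,
    Finset.prod_singleton]

lemma ginv_22 (x : Fin 6 → ℝ) : ginv 2 2 x = (Real.sin (x 0) ^ 2 * Real.sin (x 1) ^ 2)⁻¹ := by
  rw [ginv, if_pos rfl, show (Finset.univ.filter (fun m : Fin 6 => m < 2)) = {0, 1} by decide,
    Finset.prod_insert (by decide), Finset.prod_singleton]

lemma ginv_33 (x : Fin 6 → ℝ) :
    ginv 3 3 x = (Real.sin (x 0) ^ 2 * (Real.sin (x 1) ^ 2 * Real.sin (x 2) ^ 2))⁻¹ := by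
  rw [ginv, if_pos rfl, show (Finset.univ.filter (fun m : Fin 6 => m < 3)) = {0, 1, 2} by decide,
    Finset.prod_insert (by decide), Finset.prod_insert (by decide), Finset.prod_singleton]

lemma ginv_44 (x : Fin 6 → ℝ) :
    ginv 4 4 x = (Real.sin (x 0) ^ 2 * (Real.sin (x 1) ^ 2 * (Real.sin (x 2) ^ 2 *
      Real.sin (x 3) ^ 2)))⁻¹ := by
  rw [ginv, if_pos rfl,
    show (Finset.univ.filter (fun m : Fin 6 => m < 4)) = {0, 1, 2, 3} by decide,
    Finset.prod_insert (by decide), Finset.prod_insert (by decide),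
    Finset.prod_insert (by decide), Finset.prod_singleton]

lemma ginv_55 (x : Fin 6 → ℝ) :
    ginv 5 5 x = (Real.sin (x 0) ^ 2 * (Real.sin (x 1) ^ 2 * (Real.sin (x 2) ^ 2 *
      (Real.sin (x 3) ^ 2 * Real.sin (x 4) ^ 2))))⁻¹ := by
  rw [ginv, if_pos rfl,
    show (Finset.univ.filter (fun m : Fin 6 => m < 5)) = {0, 1, 2, 3, 4} by decide,
    Finset.prod_insert (by decide), Finset.prod_insert (by decide),
    Finset.prod_insert (by decide), Finset.prod_insert (by decide), Finset.prod_singleton]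

lemma ginv_off {i j : Fin 6} (h : i ≠ j) (x : Fin 6 → ℝ) : ginv i j x = 0 := by
  rw [ginv, if_neg h]

lemma sphDomain_isOpen : IsOpen sphDomain := by
  have hset : sphDomain = Set.pi Set.univ
      (fun i : Fin 6 => if (i : ℕ) < 5 then Set.Ioo 0 π else Set.Ioo 0 (2 * π)) := by
    ext y
    simp only [sphDomain, Set.mem_setOf_eq, Set.mem_pi, Set.mem_univ, true_implies]
    constructor
    · rintro ⟨h1, h2⟩ i
      by_cases hi : (i : ℕ) < 5
      · simpa [hi] using h1 i hi
      · have h5 : i = 5 := by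
          have := i.isLt; exact Fin.ext (by omega)
        subst h5; simpa [hi] using h2
    · intro h
      refine ⟨fun i hi => by simpa [hi] using h i, by simpa using h 5⟩
  rw [hset]
  exact isOpen_set_pi Set.finite_univ (fun i _ => by split <;> exact isOpen_Ioo)

set_option maxHeartbeats 4000000 in
/-- If the integrability identity of Proposition 3.3 (with `b = 0`) holds on `U` for the
index choices `(i,l,j) = (1,1,2)` and `(1,1,3)` (here `0`-indexed: `(0,0,1)` and `(0,0,2)`),
where `J i j` stands for the component `J^i_j` of the almost complex structure of `S⁶`
induced by the octonion product, then `a·c ≡ 0` on `U`. -/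
theorem ac_vanishes (J : Fin 6 → Fin 6 → (Fin 6 → ℝ) → ℝ)
    (hJdiff : ∀ i j : Fin 6, ∀ x ∈ sphDomain, DifferentiableAt ℝ (J i j) x)
    (hJ11 : ∀ x ∈ sphDomain, J 0 0 x = 0)
    (hJ21 : ∀ x ∈ sphDomain, J 1 0 x = Real.cos (x 2) / Real.sin (x 0))
    (hJ31 : ∀ x ∈ sphDomain,
      J 2 0 x = -(Real.cos (x 1) * Real.sin (x 2)) / (Real.sin (x 0) * Real.sin (x 1)))
    (hJ12 : ∀ x ∈ sphDomain, J 0 1 x = -(Real.sin (x 0) * Real.cos (x 2)))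
    (hJ13 : ∀ x ∈ sphDomain,
      J 0 2 x = Real.sin (x 0) * Real.cos (x 1) * Real.sin (x 1) * Real.sin (x 2))
    (a c : (Fin 6 → ℝ) → ℝ)
    (ha : ∀ x ∈ sphDomain, DifferentiableAt ℝ a x)
    (hc : ∀ x ∈ sphDomain, DifferentiableAt ℝ c x)
    (hid : ∀ i l j : Fin 6, ((i, l, j) = (0, 0, 1) ∨ (i, l, j) = (0, 0, 2)) →
      ∀ x ∈ sphDomain,
        a x * c x * (∑ k : Fin 6, ∑ s : Fin 6, ginv k s x * J l s x * pder k (J j i) x)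
        + c x * (∑ k : Fin 6, ∑ s : Fin 6, pder k a x * ginv k s x * J l s x * J j i x)
          = 0) :
    ∀ x ∈ sphDomain, a x * c x = 0 := by
  have main : ∀ x ∈ sphDomain, Real.cos (x 1) ^ 2 + Real.cos (x 2) ^ 2 ≠ 0 →
      a x * c x = 0 := by
    intro x hx hne
    have h0 : x 0 ∈ Set.Ioo 0 π := hx.1 0 (by norm_num)
    have h1 : x 1 ∈ Set.Ioo 0 π := hx.1 1 (by norm_num)
    have h2 : x 2 ∈ Set.Ioo 0 π := hx.1 2 (by norm_num)
    have s0pos := Real.sin_pos_of_pos_of_lt_pi h0.1 h0.2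
    have s1pos := Real.sin_pos_of_pos_of_lt_pi h1.1 h1.2
    have s2pos := Real.sin_pos_of_pos_of_lt_pi h2.1 h2.2
    have s0ne : Real.sin (x 0) ≠ 0 := ne_of_gt s0pos
    have s1ne : Real.sin (x 1) ≠ 0 := ne_of_gt s1pos
    have s2ne : Real.sin (x 2) ≠ 0 := ne_of_gt s2pos
    have hmem : sphDomain ∈ nhds x := sphDomain_isOpen.mem_nhds hx
    have hfd1 : fderiv ℝ (J 1 0) x
        = fderiv ℝ (fun z : Fin 6 → ℝ => Real.cos (z 2) / Real.sin (z 0)) x :=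
      Filter.EventuallyEq.fderiv_eq (Filter.eventuallyEq_of_mem hmem hJ21)
    have hfd2 : fderiv ℝ (J 2 0) x
        = fderiv ℝ (fun z : Fin 6 → ℝ =>
            -(Real.cos (z 1) * Real.sin (z 2)) / (Real.sin (z 0) * Real.sin (z 1))) x :=
      Filter.EventuallyEq.fderiv_eq (Filter.eventuallyEq_of_mem hmem hJ31)
    have hp1 : ∀ k : Fin 6, pder k (J 1 0) x =
        if k = 0 then -(Real.cos (x 2) * Real.cos (x 0)) / Real.sin (x 0) ^ 2
        else if k = 2 then -Real.sin (x 2) / Real.sin (x 0) else 0 := by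
      intro k
      rw [show pder k (J 1 0) x
          = pder k (fun z : Fin 6 → ℝ => Real.cos (z 2) / Real.sin (z 0)) x by
        unfold pder; rw [hfd1]]
      exact pder_f1 x s0ne k
    have hp2 : ∀ k : Fin 6, pder k (J 2 0) x =
        if k = 0 then Real.cos (x 1) * Real.sin (x 2) * Real.cos (x 0) /
            (Real.sin (x 0) ^ 2 * Real.sin (x 1))
        else if k = 1 then Real.sin (x 2) / (Real.sin (x 0) * Real.sin (x 1) ^ 2)
        else if k = 2 then
          -(Real.cos (x 1) * Real.cos (x 2)) / (Real.sin (x 0) * Real.sin (x 1))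
        else 0 := by
      intro k
      rw [show pder k (J 2 0) x = pder k (fun z : Fin 6 → ℝ =>
          -(Real.cos (z 1) * Real.sin (z 2)) / (Real.sin (z 0) * Real.sin (z 1))) x by
        unfold pder; rw [hfd2]]
      exact pder_f2 x s0ne s1ne k
    have E1 := hid 0 0 1 (Or.inl rfl) x hx
    have E2 := hid 0 0 2 (Or.inr rfl) x hx
    simp only [Fin.sum_univ_six] at E1 E2
    simp only [hp1, hp2, hJ11 x hx, hJ21 x hx, hJ31 x hx, hJ12 x hx, hJ13 x hx,
      ginv_00, ginv_11, ginv_22, ginv_33, ginv_44, ginv_55,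
      ginv_off (by decide : (0:Fin 6) ≠ 1), ginv_off (by decide : (0:Fin 6) ≠ 2),
      ginv_off (by decide : (0:Fin 6) ≠ 3), ginv_off (by decide : (0:Fin 6) ≠ 4),
      ginv_off (by decide : (0:Fin 6) ≠ 5), ginv_off (by decide : (1:Fin 6) ≠ 0),
      ginv_off (by decide : (1:Fin 6) ≠ 2), ginv_off (by decide : (1:Fin 6) ≠ 3),
      ginv_off (by decide : (1:Fin 6) ≠ 4), ginv_off (by decide : (1:Fin 6) ≠ 5),
      ginv_off (by decide : (2:Fin 6) ≠ 0), ginv_off (by decide : (2:Fin 6) ≠ 1),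
      ginv_off (by decide : (2:Fin 6) ≠ 3), ginv_off (by decide : (2:Fin 6) ≠ 4),
      ginv_off (by decide : (2:Fin 6) ≠ 5), ginv_off (by decide : (3:Fin 6) ≠ 0),
      ginv_off (by decide : (3:Fin 6) ≠ 1), ginv_off (by decide : (3:Fin 6) ≠ 2),
      ginv_off (by decide : (3:Fin 6) ≠ 4), ginv_off (by decide : (3:Fin 6) ≠ 5),
      ginv_off (by decide : (4:Fin 6) ≠ 0), ginv_off (by decide : (4:Fin 6) ≠ 1),
      ginv_off (by decide : (4:Fin 6) ≠ 2), ginv_off (by decide : (4:Fin 6) ≠ 3),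
      ginv_off (by decide : (4:Fin 6) ≠ 5), ginv_off (by decide : (5:Fin 6) ≠ 0),
      ginv_off (by decide : (5:Fin 6) ≠ 1), ginv_off (by decide : (5:Fin 6) ≠ 2),
      ginv_off (by decide : (5:Fin 6) ≠ 3), ginv_off (by decide : (5:Fin 6) ≠ 4)] at E1 E2
    simp only [Fin.reduceEq, reduceIte] at E1 E2
    norm_num at E1 E2
    have hX : a x * c x *
        (((Real.sin (x 0) ^ 2 * Real.sin (x 1) ^ 2)⁻¹ *
            (Real.sin (x 0) * Real.cos (x 1) * Real.sin (x 1) * Real.sin (x 2)) *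
            (-Real.sin (x 2) / Real.sin (x 0))) *
          (-(Real.cos (x 1) * Real.sin (x 2)) / (Real.sin (x 0) * Real.sin (x 1)))
        - ((Real.sin (x 0) ^ 2)⁻¹ * (-(Real.sin (x 0) * Real.cos (x 2))) *
              (Real.sin (x 2) / (Real.sin (x 0) * Real.sin (x 1) ^ 2))
            + (Real.sin (x 0) ^ 2 * Real.sin (x 1) ^ 2)⁻¹ *
              (Real.sin (x 0) * Real.cos (x 1) * Real.sin (x 1) * Real.sin (x 2)) *
              (-(Real.cos (x 1) * Real.cos (x 2)) / (Real.sin (x 0) * Real.sin (x 1)))) *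
            (Real.cos (x 2) / Real.sin (x 0))) = 0 := by
      linear_combination
        (-(Real.cos (x 1) * Real.sin (x 2)) / (Real.sin (x 0) * Real.sin (x 1))) * E1
        - (Real.cos (x 2) / Real.sin (x 0)) * E2
    have hXval : (((Real.sin (x 0) ^ 2 * Real.sin (x 1) ^ 2)⁻¹ *
            (Real.sin (x 0) * Real.cos (x 1) * Real.sin (x 1) * Real.sin (x 2)) *
            (-Real.sin (x 2) / Real.sin (x 0))) *
          (-(Real.cos (x 1) * Real.sin (x 2)) / (Real.sin (x 0) * Real.sin (x 1)))
        - ((Real.sin (x 0) ^ 2)⁻¹ * (-(Real.sin (x 0) * Real.cos (x 2))) *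
              (Real.sin (x 2) / (Real.sin (x 0) * Real.sin (x 1) ^ 2))
            + (Real.sin (x 0) ^ 2 * Real.sin (x 1) ^ 2)⁻¹ *
              (Real.sin (x 0) * Real.cos (x 1) * Real.sin (x 1) * Real.sin (x 2)) *
              (-(Real.cos (x 1) * Real.cos (x 2)) / (Real.sin (x 0) * Real.sin (x 1)))) *
            (Real.cos (x 2) / Real.sin (x 0)))
        = Real.sin (x 2) * (Real.cos (x 1) ^ 2 + Real.cos (x 2) ^ 2) /
            (Real.sin (x 0) ^ 3 * Real.sin (x 1) ^ 2) := by
      field_simp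
      linear_combination (Real.cos (x 1) ^ 2) * Real.sin_sq_add_cos_sq (x 2)
    rw [hXval] at hX
    have hden : Real.sin (x 2) * (Real.cos (x 1) ^ 2 + Real.cos (x 2) ^ 2) /
        (Real.sin (x 0) ^ 3 * Real.sin (x 1) ^ 2) ≠ 0 :=
      div_ne_zero (mul_ne_zero s2ne hne) (by positivity)
    exact (mul_eq_zero.mp hX).resolve_right hden
  intro x hx
  by_cases hne : Real.cos (x 1) ^ 2 + Real.cos (x 2) ^ 2 ≠ 0
  · exact main x hx hne
  push_neg at hne
  have hc1 : Real.cos (x 1) = 0 := by nlinarith [sq_nonneg (Real.cos (x 1)), sq_nonneg (Real.cos (x 2))]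
  have hc2 : Real.cos (x 2) = 0 := by nlinarith [sq_nonneg (Real.cos (x 1)), sq_nonneg (Real.cos (x 2))]
  have h1 : x 1 ∈ Set.Ioo 0 π := hx.1 1 (by norm_num)
  have hpi2 : (π / 2 : ℝ) ∈ Set.Icc (0:ℝ) π := ⟨by positivity, by linarith [Real.pi_pos]⟩
  have hx1 : x 1 = π / 2 :=
    Real.injOn_cos ⟨h1.1.le, h1.2.le⟩ hpi2 (by rw [hc1, Real.cos_pi_div_two])
  set φ : ℝ → ℝ := fun t => a (Function.update x 1 t) * c (Function.update x 1 t) with hφ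
  have hupd : Continuous (fun t : ℝ => Function.update x 1 t) := by
    apply continuous_pi
    intro i
    by_cases hi : i = 1
    · subst hi; simpa [Function.update_apply] using continuous_id'
    · simpa [Function.update_apply, hi] using (continuous_const : Continuous fun _ : ℝ => x i)
  have hx_upd : Function.update x 1 (x 1) = x := Function.update_eq_self 1 x
  have hφc : ContinuousAt φ (x 1) := by
    have hca : ContinuousAt (fun y => a y * c y) x :=
      ((ha x hx).continuousAt).mul ((hc x hx).continuousAt)
    rw [← hx_upd] at hca
    exact hca.comp hupd.continuousAt
  have hev : φ =ᶠ[nhdsWithin (x 1) {x 1}ᶜ] fun _ => 0 := by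
    have hIoo : ∀ᶠ t in nhds (x 1), t ∈ Set.Ioo 0 π := isOpen_Ioo.eventually_mem h1
    filter_upwards [hIoo.filter_mono nhdsWithin_le_nhds, eventually_mem_nhdsWithin]
      with t ht hne'
    have htne : t ≠ x 1 := hne'
    have hmemU : Function.update x 1 t ∈ sphDomain := by
      constructor
      · intro i hi
        rcases eq_or_ne i 1 with rfl | hine
        · simpa [Function.update_self] using ht
        · rw [Function.update_of_ne hine]; exact hx.1 i hi
      · rw [Function.update_of_ne (by decide)]; exact hx.2
    have hct : Real.cos t ≠ 0 := by
      intro hct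
      exact htne (by
        rw [hx1]
        exact Real.injOn_cos ⟨ht.1.le, ht.2.le⟩ hpi2 (by rw [hct, Real.cos_pi_div_two]))
    have hnz : Real.cos (Function.update x 1 t 1) ^ 2
        + Real.cos (Function.update x 1 t 2) ^ 2 ≠ 0 := by
      rw [Function.update_self, Function.update_of_ne (by decide), hc2]
      have : 0 < Real.cos t ^ 2 := by positivity
      nlinarith
    exact main _ hmemU hnz
  have t1 : Filter.Tendsto φ (nhdsWithin (x 1) {x 1}ᶜ) (nhds (φ (x 1))) :=
    hφc.continuousWithinAt
  have t2 : Filter.Tendsto φ (nhdsWithin (x 1) {x 1}ᶜ) (nhds 0) :=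
    (Filter.tendsto_congr' hev).mpr tendsto_const_nhds
  have hφ0 : φ (x 1) = 0 := tendsto_nhds_unique t1 t2
  simpa only [hφ, hx_upd] using hφ0

end
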